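/- For n ≥ 4 and t ≥ 2, the minimal cardinality N(n,2) of an upper-and-lower perfect set of squarefree degree-2 monomials in n variables satisfies: if n = 2t then every graph G on n vertices with no isolated vertices and triangle-free complement has at least t² − t edges; if n = 2t+1, at least t² edges. -/

import Mathlib

open Finset SimpleGraph


lemma range_odd_card (n : ℕ) :
    #((Finset.range n).filter (fun i => i % 2 = 1)) = n / 2 := by
  induction n with
  | zero => simp
  | succ n ih =>
    rw [Finset.range_add_one, Finset.filter_insert]
    by_cases h : n % 2 = 1
    · rw [if_pos h, Finset.card_insert_of_notMem (by simp), ih]; omega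
    · rw [if_neg h, ih]; omega

lemma fin_odd_card (n : ℕ) :
    #(Finset.univ.filter (fun v : Fin n => (v : ℕ) % 2 = 1)) = n / 2 := by
  rw [Finset.card_filter, Fin.sum_univ_eq_sum_range (fun i => if i % 2 = 1 then 1 else 0),
    ← Finset.card_filter, range_odd_card]

lemma fin_even_card (n : ℕ) :
    #(Finset.univ.filter (fun v : Fin n => (v : ℕ) % 2 = 0)) = n - n / 2 := by
  have h := Finset.card_filter_add_card_filter_not
    (s := (Finset.univ : Finset (Fin n))) (p := fun v : Fin n => (v : ℕ) % 2 = 1)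
  have h2 : (Finset.univ.filter (fun v : Fin n => ¬ (v : ℕ) % 2 = 1))
      = Finset.univ.filter (fun v : Fin n => (v : ℕ) % 2 = 0) := by
    apply Finset.filter_congr; intro v _; constructor <;> intro <;> omega
  rw [fin_odd_card, h2] at h
  simp only [Finset.card_univ, Fintype.card_fin] at h
  omega

lemma turan2_deg (n : ℕ) (v : Fin n) :
    (turanGraph n 2).degree v =
      if (v : ℕ) % 2 = 0 then n / 2 else n - n / 2 := by
  rw [SimpleGraph.degree, SimpleGraph.neighborFinset_eq_filter]
  by_cases h : (v : ℕ) % 2 = 0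
  · rw [if_pos h, ← fin_odd_card]
    congr 1
    apply Finset.filter_congr
    intro w _
    simp only [turanGraph]
    constructor <;> intro <;> omega
  · rw [if_neg h, ← fin_even_card]
    congr 1
    apply Finset.filter_congr
    intro w _
    simp only [turanGraph]
    constructor <;> intro <;> omega

lemma turan2_card (n : ℕ) :
    #(turanGraph n 2).edgeFinset = (n / 2) * (n - n / 2) := by
  have hsum := SimpleGraph.sum_degrees_eq_twice_card_edges (turanGraph n 2)
  have h : ∑ v : Fin n, (turanGraph n 2).degree v = 2 * ((n / 2) * (n - n / 2)) := by
    simp only [turan2_deg]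
    rw [Finset.sum_ite, Finset.sum_const, Finset.sum_const, fin_even_card]
    have : (Finset.univ.filter (fun v : Fin n => ¬ (v : ℕ) % 2 = 0))
        = Finset.univ.filter (fun v : Fin n => (v : ℕ) % 2 = 1) := by
      apply Finset.filter_congr; intro v _; constructor <;> intro <;> omega
    rw [this, fin_odd_card]
    ring
  omega

lemma compl_sum {V : Type} [Fintype V] [DecidableEq V] (G : SimpleGraph V)
    [DecidableRel G.Adj] :
    (#G.edgeFinset) + #Gᶜ.edgeFinset = (Fintype.card V).choose 2 := by
  rw [← SimpleGraph.card_edgeFinset_top_eq_card_choose_two]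
  rw [← Finset.card_union_of_disjoint]
  · congr 1
    ext e
    induction e with
    | _ a b =>
      simp only [Finset.mem_union, SimpleGraph.mem_edgeFinset, SimpleGraph.mem_edgeSet,
        SimpleGraph.compl_adj, SimpleGraph.top_adj]
      constructor
      · rintro (h | h)
        · exact h.ne
        · exact h.1
      · intro h
        by_cases hG : G.Adj a b
        · exact Or.inl hG
        · exact Or.inr ⟨h, hG⟩
  · rw [Finset.disjoint_left]
    intro e he he'
    induction e with
    | _ a b =>
      simp only [SimpleGraph.mem_edgeFinset, SimpleGraph.mem_edgeSet,
        SimpleGraph.compl_adj] at he he'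
      exact he'.2 he

lemma mantel {V : Type} [Fintype V] [DecidableEq V] (H : SimpleGraph V)
    [DecidableRel H.Adj] (hH : H.CliqueFree 3) :
    (#H.edgeFinset) ≤ (Fintype.card V / 2) * (Fintype.card V - Fintype.card V / 2) := by
  set n := Fintype.card V with hn
  have e : V ≃ Fin n := Fintype.equivFinOfCardEq rfl
  have itm : ((turanGraph n 2).comap ⇑e).IsTuranMaximal 2 :=
    (isTuranMaximal_turanGraph (by norm_num)).iso
      (SimpleGraph.Iso.comap e (turanGraph n 2)).symm (by norm_num)
  calc #H.edgeFinset ≤ #((turanGraph n 2).comap ⇑e).edgeFinset := itm.2 hH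
    _ = #(turanGraph n 2).edgeFinset :=
        (SimpleGraph.Iso.comap e (turanGraph n 2)).card_edgeFinset_eq
    _ = (n / 2) * (n - n / 2) := turan2_card n

/-- For `n ≥ 4` and `t ≥ 2` (lower bound for the perfect number `N(n,2)`):
every graph `G` on `n` vertices with no isolated vertices and triangle-free complement
(i.e. whose edge set is a lower and upper perfect set of squarefree degree-2 monomials)
has at least `t² - t` edges if `n = 2t`, and at least `t²` edges if `n = 2t + 1`. -/
theorem stmt_17 (t : ℕ) (ht : 2 ≤ t) :
    (∀ (V : Type) [Fintype V] [DecidableEq V] (G : SimpleGraph V) [DecidableRel G.Adj],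
      Fintype.card V = 2 * t → (∀ v : V, ∃ w : V, G.Adj v w) → Gᶜ.CliqueFree 3 →
        t ^ 2 - t ≤ G.edgeFinset.card) ∧
    (∀ (V : Type) [Fintype V] [DecidableEq V] (G : SimpleGraph V) [DecidableRel G.Adj],
      Fintype.card V = 2 * t + 1 → (∀ v : V, ∃ w : V, G.Adj v w) → Gᶜ.CliqueFree 3 →
        t ^ 2 ≤ G.edgeFinset.card) := by
  have hts : t ≤ t * t := Nat.le_mul_of_pos_left t (by omega)
  constructor
  · intro V _ _ G _ hcard _ hcf
    have hsum := compl_sum G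
    have hle := mantel Gᶜ hcf
    rw [hcard, Nat.choose_two_right] at hsum
    rw [hcard] at hle
    have h1 : 2 * t / 2 = t := by omega
    have h2 : 2 * t - t = t := by omega
    rw [h1, h2] at hle
    have h3 : 2 * t * (2 * t - 1) / 2 = 2 * (t * t) - t := by
      have h4 : 2 * t * (2 * t - 1) = 2 * (2 * (t * t) - t) := by
        zify [show (1:ℕ) ≤ 2 * t by omega, show t ≤ 2 * (t * t) by omega]
        ring
      omega
    rw [h3] at hsum
    rw [pow_two]
    omega
  · intro V _ _ G _ hcard _ hcf
    have hsum := compl_sum G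
    have hle := mantel Gᶜ hcf
    rw [hcard, Nat.choose_two_right] at hsum
    rw [hcard] at hle
    have h1 : (2 * t + 1) / 2 = t := by omega
    have h2 : 2 * t + 1 - t = t + 1 := by omega
    rw [h1, h2] at hle
    have h3 : (2 * t + 1) * (2 * t + 1 - 1) / 2 = 2 * (t * t) + t := by
      have h4 : (2 * t + 1) * (2 * t + 1 - 1) = 2 * (2 * (t * t) + t) := by
        have h0 : 2 * t + 1 - 1 = 2 * t := by omega
        rw [h0]; ring
      omega
    rw [h3] at hsum
    have hle' : #Gᶜ.edgeFinset ≤ t * t + t := by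
      have : t * (t + 1) = t * t + t := by ring
      omega
    rw [pow_two]
    omega
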